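/- Let t, t' > 0 with t ≠ t', and y, z ∈ ℝ^k with y ≠ z or t ≠ t'. Define φ(u) = √(|u − y|² + t²) − √(|u − z|² + t'²) for u ∈ ℝ^k. Then ∇φ(u) = 0 has the unique solution u_c = (tz − t'y)/(t − t') = y + t(z − y)/(t − t'), and the Hessian at u_c equals (1/t − 1/t')(1 + β²)^{-1/2} · diag((1 + β²)^{-1}, 1, …, 1) in suitable orthonormal coordinates, where β = |y − z|/|t − t'|. -/

import Mathlib

open scoped RealInnerProductSpace

variable {E : Type*} [NormedAddCommGroup E] [InnerProductSpace ℝ E]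

/-- The real inner product as a continuous bilinear map. -/
noncomputable def islm (E : Type*) [NormedAddCommGroup E] [InnerProductSpace ℝ E] :
    E →L[ℝ] E →L[ℝ] ℝ :=
  LinearMap.mkContinuous₂
    (LinearMap.mk₂ ℝ (fun x y => ⟪x, y⟫)
      (fun _ _ _ => inner_add_left _ _ _)
      (fun _ _ _ => real_inner_smul_left _ _ _)
      (fun _ _ _ => inner_add_right _ _ _)
      (fun _ _ _ => real_inner_smul_right _ _ _)) 1
    (fun x y => by
      rw [one_mul]
      simpa [Real.norm_eq_abs] using abs_real_inner_le_norm x y)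

@[simp] lemma islm_apply (x y : E) : islm E x y = ⟪x, y⟫ := rfl

lemma hasFDerivAt_sqrtdist (c : E) (s : ℝ) (hs : s ≠ 0) (u : E) :
    HasFDerivAt (fun u : E => Real.sqrt (‖u - c‖ ^ 2 + s ^ 2))
      ((Real.sqrt (‖u - c‖ ^ 2 + s ^ 2))⁻¹ • islm E (u - c)) u := by
  have hQpos : 0 < ‖u - c‖ ^ 2 + s ^ 2 := by positivity
  have h1 : HasFDerivAt (fun u : E => u - c) (ContinuousLinearMap.id ℝ E) u :=
    (hasFDerivAt_id u).sub_const c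
  have h2 := (h1.inner ℝ h1).add_const (s ^ 2)
  have h3 := (Real.hasDerivAt_sqrt hQpos.ne').comp_hasFDerivAt (f := fun u : E => ‖u - c‖ ^ 2 + s ^ 2) u
    (by simpa [real_inner_self_eq_norm_sq] using h2)
  refine h3.congr_fderiv ?_
  ext v
  have hAne : Real.sqrt (‖u - c‖ ^ 2 + s ^ 2) ≠ 0 := (Real.sqrt_pos.2 hQpos).ne'
  simp [fderivInnerCLM_apply, real_inner_comm (u - c) v, real_inner_self_eq_norm_sq]
  simp [inner_sub_left]
  field_simp
  ring

lemma hasGradientAt_phi [CompleteSpace E] (y z : E) (t t' : ℝ) (ht : t ≠ 0) (ht' : t' ≠ 0) (u : E) :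
    HasGradientAt (fun u : E =>
        Real.sqrt (‖u - y‖ ^ 2 + t ^ 2) - Real.sqrt (‖u - z‖ ^ 2 + t' ^ 2))
      ((Real.sqrt (‖u - y‖ ^ 2 + t ^ 2))⁻¹ • (u - y) -
        (Real.sqrt (‖u - z‖ ^ 2 + t' ^ 2))⁻¹ • (u - z)) u := by
  have h := (hasFDerivAt_sqrtdist y t ht u).sub (hasFDerivAt_sqrtdist z t' ht' u)
  rw [hasGradientAt_iff_hasFDerivAt]
  refine h.congr_fderiv ?_
  ext v
  simp [InnerProductSpace.toDual_apply_apply, inner_sub_left, real_inner_smul_left]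

lemma hasFDerivAt_D (c : E) (s : ℝ) (hs : s ≠ 0) (u : E) :
    HasFDerivAt (fun u : E => (Real.sqrt (‖u - c‖ ^ 2 + s ^ 2))⁻¹ • islm E (u - c))
      ((Real.sqrt (‖u - c‖ ^ 2 + s ^ 2))⁻¹ • islm E +
        (-(Real.sqrt (‖u - c‖ ^ 2 + s ^ 2) ^ 2)⁻¹ •
          ((Real.sqrt (‖u - c‖ ^ 2 + s ^ 2))⁻¹ • islm E (u - c))).smulRight
            (islm E (u - c))) u := by
  have hA := hasFDerivAt_sqrtdist c s hs u
  have hApos : 0 < Real.sqrt (‖u - c‖ ^ 2 + s ^ 2) := Real.sqrt_pos.2 (by positivity)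
  have hinv := (hasDerivAt_inv hApos.ne').comp_hasFDerivAt u hA
  have hlin : HasFDerivAt (fun u : E => islm E (u - c)) (islm E) u := by
    have h1 : (fun u : E => islm E (u - c)) = fun u => islm E u - islm E c := by
      ext1 u; rw [map_sub]
    rw [h1]
    exact ((islm E).hasFDerivAt).sub_const _
  exact hinv.smul hlin


lemma grad_zero_iff [CompleteSpace E] (t t' : ℝ) (ht : 0 < t) (ht' : 0 < t')
    (htne : t ≠ t') (y z : E) (u : E) :
    gradient (fun u : E =>
        Real.sqrt (‖u - y‖ ^ 2 + t ^ 2) - Real.sqrt (‖u - z‖ ^ 2 + t' ^ 2)) u = 0 ↔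
      u = y + (t / (t - t')) • (z - y) := by
  have hd : t - t' ≠ 0 := sub_ne_zero.2 htne
  rw [(hasGradientAt_phi y z t t' ht.ne' ht'.ne' u).gradient]
  constructor
  · intro h0
    set a : ℝ := Real.sqrt (‖u - y‖ ^ 2 + t ^ 2) with hA
    set b : ℝ := Real.sqrt (‖u - z‖ ^ 2 + t' ^ 2) with hB
    have hapos : 0 < a := Real.sqrt_pos.2 (by positivity)
    have hbpos : 0 < b := Real.sqrt_pos.2 (by positivity)
    have ha2 : a ^ 2 = ‖u - y‖ ^ 2 + t ^ 2 := Real.sq_sqrt (by positivity)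
    have hb2 : b ^ 2 = ‖u - z‖ ^ 2 + t' ^ 2 := Real.sq_sqrt (by positivity)
    have heq : a⁻¹ • (u - y) = b⁻¹ • (u - z) := sub_eq_zero.1 h0
    have hnorm : a⁻¹ * ‖u - y‖ = b⁻¹ * ‖u - z‖ := by
      have := congrArg norm heq
      rwa [norm_smul, norm_smul, Real.norm_eq_abs, Real.norm_eq_abs,
        abs_of_pos (inv_pos.2 hapos), abs_of_pos (inv_pos.2 hbpos)] at this
    have hkey : t * b = t' * a := by
      have h1 : ‖u - y‖ ^ 2 * b ^ 2 = ‖u - z‖ ^ 2 * a ^ 2 := by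
        have := congrArg (· ^ 2) hnorm
        simp only [mul_pow] at this
        field_simp at this
        linarith [this]
      have h2 : (t * b) ^ 2 = (t' * a) ^ 2 := by nlinarith [h1, ha2, hb2]
      have h3 : 0 < t * b := by positivity
      have h4 : 0 < t' * a := by positivity
      nlinarith [h2, h3, h4]
    have haneb : a ≠ b := by
      intro hab
      apply htne
      have : t * a = t' * a := by rw [hab] at hkey ⊢; exact hkey
      exact mul_right_cancel₀ hapos.ne' this
    have habne : a - b ≠ 0 := sub_ne_zero.2 haneb
    have hzy : z - y = ((a - b) / a) • (u - y) := by
      have huz' : (b / a) • (u - y) = u - z := by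
        rw [div_eq_mul_inv, ← smul_smul, heq, smul_smul,
          mul_inv_cancel₀ hbpos.ne', one_smul]
      calc z - y = (u - y) - (u - z) := by abel
      _ = (1 : ℝ) • (u - y) - (b / a) • (u - y) := by rw [one_smul, huz']
      _ = ((a - b) / a) • (u - y) := by
          rw [← sub_smul]
          congr 1
          field_simp
    have hfrac : a / (a - b) * ((a - b) / a) = 1 := by field_simp
    have huy' : u - y = (t / (t - t')) • (z - y) := by
      have h5 : a / (a - b) = t / (t - t') := by
        field_simp
        linarith [hkey]
      rw [hzy, smul_smul, ← h5, hfrac, one_smul]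
    rw [← huy', add_sub_cancel]
  · rintro rfl
    have huy : y + (t / (t - t')) • (z - y) - y = (t / (t - t')) • (z - y) :=
      add_sub_cancel_left y _
    have huz : y + (t / (t - t')) • (z - y) - z = (t' / (t - t')) • (z - y) := by
      have h1 : t' / (t - t') = t / (t - t') - 1 := by field_simp; ring
      rw [h1, sub_smul, one_smul]
      abel
    set S : ℝ := Real.sqrt (1 + ‖z - y‖ ^ 2 / (t - t') ^ 2) with hS
    have hSpos : 0 < S := Real.sqrt_pos.2 (by positivity)
    have hny : Real.sqrt (‖y + (t / (t - t')) • (z - y) - y‖ ^ 2 + t ^ 2) = t * S := by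
      have h1 : ‖y + (t / (t - t')) • (z - y) - y‖ ^ 2 + t ^ 2 =
          t ^ 2 * (1 + ‖z - y‖ ^ 2 / (t - t') ^ 2) := by
        rw [huy, norm_smul, mul_pow, Real.norm_eq_abs, sq_abs, div_pow]
        field_simp
        ring
      rw [h1, Real.sqrt_mul (sq_nonneg t), Real.sqrt_sq ht.le, hS]
    have hnz : Real.sqrt (‖y + (t / (t - t')) • (z - y) - z‖ ^ 2 + t' ^ 2) = t' * S := by
      have h1 : ‖y + (t / (t - t')) • (z - y) - z‖ ^ 2 + t' ^ 2 =
          t' ^ 2 * (1 + ‖z - y‖ ^ 2 / (t - t') ^ 2) := by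
        rw [huz, norm_smul, mul_pow, Real.norm_eq_abs, sq_abs, div_pow]
        field_simp
        ring
      rw [h1, Real.sqrt_mul (sq_nonneg t'), Real.sqrt_sq ht'.le, hS]
    rw [hny, hnz, huy, huz, smul_smul, smul_smul, ← sub_smul]
    have h0 : (t * S)⁻¹ * (t / (t - t')) - (t' * S)⁻¹ * (t' / (t - t')) = 0 := by
      field_simp
      ring
    rw [h0, zero_smul]

lemma hessian_eval (t t' : ℝ) (ht : 0 < t) (ht' : 0 < t') (htne : t ≠ t') (y z : E) (v : E) :
    iteratedFDeriv ℝ 2 (fun u : E =>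
        Real.sqrt (‖u - y‖ ^ 2 + t ^ 2) - Real.sqrt (‖u - z‖ ^ 2 + t' ^ 2))
      (y + (t / (t - t')) • (z - y)) ![v, v] =
      (1 / t - 1 / t') * (1 + (‖y - z‖ / |t - t'|) ^ 2) ^ (-(1:ℝ) / 2) *
        (‖v‖ ^ 2 - ((‖y - z‖ / |t - t'|) ^ 2 / (1 + (‖y - z‖ / |t - t'|) ^ 2)) *
          (⟪v, z - y⟫ / ‖z - y‖) ^ 2) := by
  have hd : t - t' ≠ 0 := sub_ne_zero.2 htne
  have hf : fderiv ℝ (fun u : E =>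
      Real.sqrt (‖u - y‖ ^ 2 + t ^ 2) - Real.sqrt (‖u - z‖ ^ 2 + t' ^ 2)) =
      fun u : E => (Real.sqrt (‖u - y‖ ^ 2 + t ^ 2))⁻¹ • islm E (u - y) -
        (Real.sqrt (‖u - z‖ ^ 2 + t' ^ 2))⁻¹ • islm E (u - z) :=
    funext fun u =>
      ((hasFDerivAt_sqrtdist y t ht.ne' u).sub (hasFDerivAt_sqrtdist z t' ht'.ne' u)).fderiv
  rw [iteratedFDeriv_two_apply, hf]
  rw [fderiv_fun_sub (hasFDerivAt_D y t ht.ne' (y + (t / (t - t')) • (z - y))).differentiableAt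
    (hasFDerivAt_D z t' ht'.ne' (y + (t / (t - t')) • (z - y))).differentiableAt,
    (hasFDerivAt_D y t ht.ne' (y + (t / (t - t')) • (z - y))).fderiv,
    (hasFDerivAt_D z t' ht'.ne' (y + (t / (t - t')) • (z - y))).fderiv]
  have huy : y + (t / (t - t')) • (z - y) - y = (t / (t - t')) • (z - y) :=
    add_sub_cancel_left y _
  have huz : y + (t / (t - t')) • (z - y) - z = (t' / (t - t')) • (z - y) := by
    have h1 : t' / (t - t') = t / (t - t') - 1 := by field_simp; ring
    rw [h1, sub_smul, one_smul]
    abel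
  set S : ℝ := Real.sqrt (1 + ‖z - y‖ ^ 2 / (t - t') ^ 2) with hS
  have hSpos : 0 < S := Real.sqrt_pos.2 (by positivity)
  have hS2 : S ^ 2 = 1 + ‖z - y‖ ^ 2 / (t - t') ^ 2 := Real.sq_sqrt (by positivity)
  have hny : Real.sqrt (‖y + (t / (t - t')) • (z - y) - y‖ ^ 2 + t ^ 2) = t * S := by
    have h1 : ‖y + (t / (t - t')) • (z - y) - y‖ ^ 2 + t ^ 2 =
        t ^ 2 * (1 + ‖z - y‖ ^ 2 / (t - t') ^ 2) := by
      rw [huy, norm_smul, mul_pow, Real.norm_eq_abs, sq_abs, div_pow]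
      field_simp
      ring
    rw [h1, Real.sqrt_mul (sq_nonneg t), Real.sqrt_sq ht.le, hS]
  have hnz : Real.sqrt (‖y + (t / (t - t')) • (z - y) - z‖ ^ 2 + t' ^ 2) = t' * S := by
    have h1 : ‖y + (t / (t - t')) • (z - y) - z‖ ^ 2 + t' ^ 2 =
        t' ^ 2 * (1 + ‖z - y‖ ^ 2 / (t - t') ^ 2) := by
      rw [huz, norm_smul, mul_pow, Real.norm_eq_abs, sq_abs, div_pow]
      field_simp
      ring
    rw [h1, Real.sqrt_mul (sq_nonneg t'), Real.sqrt_sq ht'.le, hS]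
  have hβ : (1 : ℝ) + (‖y - z‖ / |t - t'|) ^ 2 = S ^ 2 := by
    rw [hS2, div_pow, sq_abs, norm_sub_rev]
  simp only [ContinuousLinearMap.sub_apply, ContinuousLinearMap.add_apply,
    ContinuousLinearMap.smul_apply, ContinuousLinearMap.smulRight_apply,
    ContinuousLinearMap.neg_apply, islm_apply, smul_eq_mul, Matrix.cons_val_zero,
    Matrix.cons_val_one, Matrix.head_cons]
  rw [hny, hnz, huy, huz, real_inner_smul_left, real_inner_smul_left,
    real_inner_self_eq_norm_sq, real_inner_comm v (z - y), hβ]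
  have hrpow : ((S : ℝ) ^ 2) ^ (-(1:ℝ) / 2) = S⁻¹ := by
    rw [show (-(1:ℝ) / 2) = -(1 / 2) by ring, Real.rpow_neg (by positivity),
      ← Real.rpow_natCast S 2, ← Real.rpow_mul hSpos.le]
    norm_num [Real.rpow_one]
  have hb2 : (‖y - z‖ / |t - t'|) ^ 2 = ‖z - y‖ ^ 2 / (t - t') ^ 2 := by
    rw [div_pow, sq_abs, norm_sub_rev]
  rw [hrpow, hb2]
  rcases eq_or_ne (‖z - y‖) 0 with hr | hr
  · have hzy : z - y = 0 := norm_eq_zero.1 hr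
    rw [hr, hzy, inner_zero_right]
    field_simp
    ring
  · field_simp
    ring

/-- Stationary phase analysis for `φ(u) = √(|u−y|²+t²) − √(|u−z|²+t'²)`:
`∇φ` vanishes exactly at `u_c = y + (t/(t−t'))(z−y) = (t−t')⁻¹(tz − t'y)`, and the
Hessian at `u_c` is `(1/t − 1/t')(1+β²)^{-1/2} diag((1+β²)^{-1}, 1, …, 1)` with the first
axis along `z − y`, where `β = |y−z|/|t−t'|`. -/
theorem stationary_phase_distance_kernel (k : ℕ) (hk : 1 ≤ k) (t t' : ℝ)
    (ht : 0 < t) (ht' : 0 < t') (htne : t ≠ t')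
    (y z : EuclideanSpace ℝ (Fin k)) (hyz : y ≠ z ∨ t ≠ t') :
    letI φ : EuclideanSpace ℝ (Fin k) → ℝ := fun u =>
      Real.sqrt (‖u - y‖ ^ 2 + t ^ 2) - Real.sqrt (‖u - z‖ ^ 2 + t' ^ 2)
    letI uc : EuclideanSpace ℝ (Fin k) := y + (t / (t - t')) • (z - y)
    letI β : ℝ := ‖y - z‖ / |t - t'|
    uc = (t - t')⁻¹ • (t • z - t' • y) ∧
    (∀ u, gradient φ u = 0 ↔ u = uc) ∧
    (∀ v : EuclideanSpace ℝ (Fin k),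
      iteratedFDeriv ℝ 2 φ uc ![v, v] =
        (1 / t - 1 / t') * (1 + β ^ 2) ^ (-(1:ℝ) / 2) *
          (‖v‖ ^ 2 - (β ^ 2 / (1 + β ^ 2)) * (⟪v, z - y⟫ / ‖z - y‖) ^ 2)) := by
  have hd : t - t' ≠ 0 := sub_ne_zero.2 htne
  exact ⟨by match_scalars <;> (field_simp; try ring),
    fun u => grad_zero_iff t t' ht ht' htne y z u,
    fun v => hessian_eval t t' ht ht' htne y z v⟩
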